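/- Let M = {1,…,n}, n ≥ 3, be a finite metric space in general position. Then for all sufficiently small ε > 0, the isometry group of the open ball U_ε(M) in the Gromov–Hausdorff space contains a subgroup isomorphic to the symmetric group Sₙ: the map sending a permutation τ ∈ Sₙ to the isometry D_{M,M^τ,ε} of U_ε(M) is an injective group homomorphism. -/

import Mathlib

/-- `M` is in general position. -/
def InGeneralPosition (M : Type*) [MetricSpace M] : Prop :=
  (∀ x y z w : M, x ≠ y → z ≠ w → ({x, y} : Set M) ≠ {z, w} → dist x y ≠ dist z w) ∧
    (∀ x y z : M, x ≠ y → y ≠ z → x ≠ z → dist x z < dist x y + dist y z)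

noncomputable section

namespace Stmt14

open GromovHausdorff Metric Set Function

variable {M : Type} [MetricSpace M]

structure Consts (M : Type) [MetricSpace M] (c : ℝ) : Prop where
  pos : 0 < c
  sep : ∀ a b : M, a ≠ b → c ≤ dist a b
  tri : ∀ a b d : M, a ≠ b → b ≠ d → a ≠ d → dist a d + c ≤ dist a b + dist b d
  gap : ∀ a b a' b' : M, a ≠ b → a' ≠ b' → ({a, b} : Set M) ≠ {a', b'} →
    c ≤ |dist a b - dist a' b'|

theorem exists_third [Fintype M] (hcard : 3 ≤ Fintype.card M) :
    ∀ a b : M, ∃ d : M, d ≠ a ∧ d ≠ b := by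
  classical
  intro a b
  by_contra h
  push_neg at h
  have hsub : (Finset.univ : Finset M) ⊆ {a, b} := by
    intro x _
    by_cases hx : x = a
    · simp [hx]
    · simp [h x hx]
  have h1 := Finset.card_le_card hsub
  have h2 : ({a, b} : Finset M).card ≤ 2 := by
    apply le_trans (Finset.card_insert_le a {b})
    simp
  rw [Finset.card_univ] at h1
  omega

theorem exists_consts [Fintype M] [Nonempty M] (hGP : InGeneralPosition M) :
    ∃ c : ℝ, Consts M c := by
  classical
  set S : Finset ℝ :=
    (((Finset.univ : Finset (M × M)).image fun p =>
        if p.1 ≠ p.2 then dist p.1 p.2 else 1) ∪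
    ((Finset.univ : Finset (M × M × M)).image fun t =>
        if t.1 ≠ t.2.1 ∧ t.2.1 ≠ t.2.2 ∧ t.1 ≠ t.2.2
        then dist t.1 t.2.1 + dist t.2.1 t.2.2 - dist t.1 t.2.2 else 1)) ∪
    ((Finset.univ : Finset ((M × M) × M × M)).image fun q =>
        if q.1.1 ≠ q.1.2 ∧ q.2.1 ≠ q.2.2 ∧ ({q.1.1, q.1.2} : Set M) ≠ {q.2.1, q.2.2}
        then |dist q.1.1 q.1.2 - dist q.2.1 q.2.2| else 1) with hS
  have hmem1 : ∀ a b : M, a ≠ b → dist a b ∈ S := by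
    intro a b hab
    apply Finset.mem_union_left
    apply Finset.mem_union_left
    exact Finset.mem_image.2 ⟨(a, b), Finset.mem_univ _, by simp [hab]⟩
  have hmem2 : ∀ a b d : M, a ≠ b → b ≠ d → a ≠ d →
      dist a b + dist b d - dist a d ∈ S := by
    intro a b d h1 h2 h3
    apply Finset.mem_union_left
    apply Finset.mem_union_right
    exact Finset.mem_image.2 ⟨(a, b, d), Finset.mem_univ _, by simp [h1, h2, h3]⟩
  have hmem3 : ∀ a b a' b' : M, a ≠ b → a' ≠ b' → ({a, b} : Set M) ≠ {a', b'} →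
      |dist a b - dist a' b'| ∈ S := by
    intro a b a' b' h1 h2 h3
    apply Finset.mem_union_right
    exact Finset.mem_image.2 ⟨((a, b), (a', b')), Finset.mem_univ _, by
      rw [if_pos ⟨h1, h2, h3⟩]⟩
  have hSne : S.Nonempty := by
    obtain ⟨a⟩ := (inferInstance : Nonempty M)
    exact ⟨_, Finset.mem_union_left _ (Finset.mem_union_left _
      (Finset.mem_image.2 ⟨(a, a), Finset.mem_univ _, rfl⟩))⟩
  have hpos : ∀ x ∈ S, 0 < x := by
    intro x hx
    rcases Finset.mem_union.1 hx with hx' | hx'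
    · rcases Finset.mem_union.1 hx' with hx'' | hx''
      · obtain ⟨p, -, rfl⟩ := Finset.mem_image.1 hx''
        split_ifs with h
        · exact dist_pos.2 h
        · norm_num
      · obtain ⟨t, -, rfl⟩ := Finset.mem_image.1 hx''
        split_ifs with h
        · have := hGP.2 t.1 t.2.1 t.2.2 h.1 h.2.1 h.2.2
          linarith
        · norm_num
    · obtain ⟨q, -, rfl⟩ := Finset.mem_image.1 hx'
      split_ifs with h
      · have := hGP.1 q.1.1 q.1.2 q.2.1 q.2.2 h.1 h.2.1 h.2.2
        exact abs_pos.2 (sub_ne_zero.2 this)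
      · norm_num
  refine ⟨S.min' hSne, ?_, ?_, ?_, ?_⟩
  · exact hpos _ (S.min'_mem hSne)
  · intro a b hab
    exact S.min'_le _ (hmem1 a b hab)
  · intro a b d h1 h2 h3
    have := S.min'_le _ (hmem2 a b d h1 h2 h3)
    linarith
  · intro a b a' b' h1 h2 h3
    exact S.min'_le _ (hmem3 a b a' b' h1 h2 h3)


/-- Core triangle inequality for the modified distance. -/
theorem key_tri {c k : ℝ} (hC : Consts M c) (hk0 : 0 ≤ k) (h3k : 3 * k ≤ c)
    {W : Type*} (e : W → W → ℝ) (he : ∀ a b c', e a c' ≤ e a b + e b c')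
    (F : W → M) (hF : ∀ a b, |e a b - dist (F a) (F b)| ≤ k) (τ : Equiv.Perm M)
    (x y z : W) :
    e x z + (dist (τ (F x)) (τ (F z)) - dist (F x) (F z)) ≤
      (e x y + (dist (τ (F x)) (τ (F y)) - dist (F x) (F y))) +
        (e y z + (dist (τ (F y)) (τ (F z)) - dist (F y) (F z))) := by
  by_cases hab : F x = F y
  · rw [hab]; have := he x y z; simp only [dist_self]; linarith
  by_cases hbc : F y = F z
  · rw [← hbc]; have := he x y z; simp only [dist_self]; linarith
  have h1 := abs_le.1 (hF x y)
  have h2 := abs_le.1 (hF y z)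
  have h3 := abs_le.1 (hF x z)
  by_cases hac : F x = F z
  · have hsep : c ≤ dist (τ (F x)) (τ (F y)) :=
      hC.sep _ _ (fun h => hab (τ.injective h))
    have hxz0 : dist (F x) (F z) = 0 := by rw [hac, dist_self]
    have hτxz0 : dist (τ (F x)) (τ (F z)) = 0 := by rw [hac, dist_self]
    have e1 : dist (F y) (F z) = dist (F x) (F y) := by rw [hac, dist_comm]
    have e2 : dist (τ (F y)) (τ (F z)) = dist (τ (F x)) (τ (F y)) := by
      rw [hac, dist_comm]
    have hcp := hC.pos
    linarith
  · have htri := hC.tri (τ (F x)) (τ (F y)) (τ (F z))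
      (fun h => hab (τ.injective h)) (fun h => hbc (τ.injective h))
      (fun h => hac (τ.injective h))
    linarith

/-- Positivity for the modified distance across different labels. -/
theorem key_pos {c k : ℝ} (hC : Consts M c)
    {W : Type*} (e : W → W → ℝ)
    (F : W → M) (hF : ∀ a b, |e a b - dist (F a) (F b)| ≤ k) (τ : Equiv.Perm M)
    {x z : W} (h : F x ≠ F z) :
    c - k ≤ e x z + (dist (τ (F x)) (τ (F z)) - dist (F x) (F z)) := by
  have h3 := abs_le.1 (hF x z)
  have hsep : c ≤ dist (τ (F x)) (τ (F z)) :=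
    hC.sep _ _ (fun hh => h (τ.injective hh))
  linarith

variable (M) in
/-- The hypotheses needed for the modified distance to be a metric. -/
def GoodF (X : Type) [MetricSpace X] (f : X → M) : Prop :=
  ∃ c k : ℝ, Consts M c ∧ 0 ≤ k ∧ 3 * k ≤ c ∧
    ∀ x y : X, |dist x y - dist (f x) (f y)| ≤ k

variable (M) in
/-- Type synonym: `X` with distances across parts modified according to `τ`. -/
def Mod (X : Type) (_τ : Equiv.Perm M) (_f : X → M) : Type := X

variable (M) in
/-- The modified distance. -/
def modDist {X : Type} [MetricSpace X] (τ : Equiv.Perm M) (f : X → M) (x y : X) : ℝ :=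
  dist x y + (dist (τ (f x)) (τ (f y)) - dist (f x) (f y))

/-- The modified metric space structure, assuming `GoodF`. -/
def modMS {X : Type} [MetricSpace X] (τ : Equiv.Perm M) (f : X → M)
    (h : GoodF M X f) : MetricSpace X where
  dist := modDist M τ f
  dist_self x := by simp [modDist]
  dist_comm x y := by simp only [modDist]; rw [dist_comm, dist_comm (f x), dist_comm (τ (f x))]
  dist_triangle x y z := by
    obtain ⟨c, k, hC, hk0, h3k, hd⟩ := h
    exact key_tri hC hk0 h3k (fun a b => dist a b) dist_triangle f hd τ x y z
  eq_of_dist_eq_zero := by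
    intro x y h0
    obtain ⟨c, k, hC, hk0, h3k, hd⟩ := h
    by_cases hf : f x = f y
    · simp only [modDist, hf, dist_self, sub_self, add_zero] at h0
      exact eq_of_dist_eq_zero h0
    · have hp : c - k ≤ dist x y + (dist (τ (f x)) (τ (f y)) - dist (f x) (f y)) :=
        key_pos hC (fun a b => dist a b) f hd τ hf
      have hcp := hC.pos
      simp only [modDist] at h0
      linarith

variable (M) in
instance modMetricSpace (X : Type) [MetricSpace X] (τ : Equiv.Perm M) (f : X → M) :
    MetricSpace (Mod M X τ f) :=
  show MetricSpace X from
    @dite _ (GoodF M X f) (Classical.dec _) (fun h => modMS τ f h) (fun _ => ‹MetricSpace X›)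

theorem modMetricSpace_pos {X : Type} [MetricSpace X] (τ : Equiv.Perm M) (f : X → M)
    (h : GoodF M X f) : modMetricSpace M X τ f = modMS τ f h := by
  unfold modMetricSpace
  exact dif_pos h

theorem modMetricSpace_neg {X : Type} [MetricSpace X] (τ : Equiv.Perm M) (f : X → M)
    (h : ¬ GoodF M X f) : modMetricSpace M X τ f = ‹MetricSpace X› := by
  unfold modMetricSpace
  exact dif_neg h

theorem Mod.dist_eq {X : Type} [MetricSpace X] {τ : Equiv.Perm M} {f : X → M}
    (h : GoodF M X f) (x y : Mod M X τ f) :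
    dist x y = modDist M τ f x y := by
  show (modMetricSpace M X τ f).toPseudoMetricSpace.toDist.dist x y = _
  rw [modMetricSpace_pos τ f h]
  rfl

theorem Mod.dist_eq_neg {X : Type} [MetricSpace X] {τ : Equiv.Perm M} {f : X → M}
    (h : ¬ GoodF M X f) (x y : Mod M X τ f) :
    dist x y = dist (show X from x) (show X from y) := by
  show (modMetricSpace M X τ f).toPseudoMetricSpace.toDist.dist x y = _
  rw [modMetricSpace_neg τ f h]
  rfl


variable (M) in
/-- Identity map into the modified space. -/
def Mod.of {X : Type} (τ : Equiv.Perm M) (f : X → M) (x : X) : Mod M X τ f := x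

theorem Mod.of_surjective {X : Type} (τ : Equiv.Perm M) (f : X → M) :
    Function.Surjective (Mod.of M τ f) := fun y => ⟨y, rfl⟩

theorem continuous_mod_of {X : Type} [MetricSpace X] (τ : Equiv.Perm M) (f : X → M) :
    Continuous (Mod.of M τ f) := by
  by_cases h : GoodF M X f
  · obtain ⟨c, k, hC, hk0, h3k, hd⟩ := h
    rw [Metric.continuous_iff]
    intro b ε hε
    refine ⟨min ε (c / 3), lt_min hε (by linarith [hC.pos]), fun a hab => ?_⟩
    have hfab : f a = f b := by
      by_contra hne
      have h1 := hC.sep _ _ hne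
      have h2 := abs_le.1 (hd a b)
      have h3 : dist a b < c / 3 := lt_of_lt_of_le hab (min_le_right _ _)
      have hcp := hC.pos
      linarith
    have hG : GoodF M X f := ⟨c, k, hC, hk0, h3k, hd⟩
    rw [Mod.dist_eq hG]
    unfold modDist Mod.of
    rw [hfab]
    simp only [dist_self, sub_self, add_zero]
    exact lt_of_lt_of_le hab (min_le_left _ _)
  · rw [Metric.continuous_iff]
    intro b ε hε
    exact ⟨ε, hε, fun a hab => by rw [Mod.dist_eq_neg h]; exact hab⟩

instance {X : Type} [MetricSpace X] [CompactSpace X] (τ : Equiv.Perm M) (f : X → M) :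
    CompactSpace (Mod M X τ f) := by
  constructor
  have : (Set.univ : Set (Mod M X τ f)) = (Mod.of M τ f) '' Set.univ := by
    rw [Set.image_univ, Set.range_eq_univ.2 (Mod.of_surjective τ f)]
  rw [this]
  exact isCompact_univ.image (continuous_mod_of τ f)

instance {X : Type} [Nonempty X] (τ : Equiv.Perm M) (f : X → M) :
    Nonempty (Mod M X τ f) := ‹Nonempty X›

theorem goodF_of {X : Type} [MetricSpace X] {c ε : ℝ} (hC : Consts M c) (hε0 : 0 ≤ ε)
    (hεc : 6 * ε ≤ c) {f : X → M} (hd : ∀ x y : X, |dist x y - dist (f x) (f y)| ≤ 2 * ε) :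
    GoodF M X f := ⟨c, 2 * ε, hC, by linarith, by linarith, hd⟩

/-- The label distortion of `τ ∘ f` on the modified space equals that of `f` on `X`. -/
theorem mod_labeling {X : Type} [MetricSpace X] {τ : Equiv.Perm M} {f : X → M} {k : ℝ}
    (hG : GoodF M X f) (hd : ∀ x y : X, |dist x y - dist (f x) (f y)| ≤ k) :
    ∀ x y : Mod M X τ f, |dist x y - dist (τ (f x)) (τ (f y))| ≤ k := by
  intro x y
  rw [Mod.dist_eq hG]
  unfold modDist
  have := hd x y
  convert this using 2
  ring

/-- Composition of two modifications. -/
def modModIso {X : Type} [MetricSpace X] (σ τ : Equiv.Perm M) (f : X → M)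
    (hG : GoodF M X f) (hG2 : GoodF M (Mod M X τ f) (fun x => τ (f x))) :
    Mod M (Mod M X τ f) σ (fun x => τ (f x)) ≃ᵢ Mod M X (σ * τ) f where
  toEquiv := Equiv.refl X
  isometry_toFun := Isometry.of_dist_eq fun x y => by
    show @dist (Mod M X (σ * τ) f) _ x y =
      @dist (Mod M (Mod M X τ f) σ fun x => τ (f x)) _ x y
    rw [Mod.dist_eq hG2, Mod.dist_eq (τ := σ * τ) hG (x := x) (y := y)]
    unfold modDist
    rw [Mod.dist_eq (τ := τ) hG (x := x) (y := y)]
    unfold modDist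
    simp only [Equiv.Perm.mul_apply]
    ring

/-- Modification by the identity permutation. -/
def modOneIso {X : Type} [MetricSpace X] (f : X → M) (hG : GoodF M X f) :
    Mod M X 1 f ≃ᵢ X where
  toEquiv := Equiv.refl X
  isometry_toFun := Isometry.of_dist_eq fun x y => by
    show @dist X _ x y = @dist (Mod M X 1 f) _ x y
    rw [Mod.dist_eq hG]
    unfold modDist
    simp

/-- Transport of the modification along an isometry. -/
def modTransportIso {A B : Type} [MetricSpace A] [MetricSpace B] (Φ : A ≃ᵢ B)
    (τ : Equiv.Perm M) (f : B → M) (hGA : GoodF M A (fun a => f (Φ a)))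
    (hGB : GoodF M B f) :
    Mod M A τ (fun a => f (Φ a)) ≃ᵢ Mod M B τ f where
  toEquiv := Φ.toEquiv
  isometry_toFun := Isometry.of_dist_eq fun x y => by
    show @dist (Mod M B τ f) _ (Φ x) (Φ y) = _
    rw [Mod.dist_eq (τ := τ) hGB (x := Φ x) (y := Φ y), Mod.dist_eq hGA]
    unfold modDist
    rw [Φ.dist_eq x y]

theorem goodF_id {c : ℝ} (hC : Consts M c) : GoodF M M id :=
  ⟨c, 0, hC, le_refl _, by linarith [hC.pos], fun x y => by simp⟩

/-- `Mod M M τ id` is isometric to `M` itself. -/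
def modSelfIso {c : ℝ} (hC : Consts M c) (τ : Equiv.Perm M) : M ≃ᵢ Mod M M τ id where
  toEquiv := (τ⁻¹ : Equiv.Perm M)
  isometry_toFun := Isometry.of_dist_eq fun x y => by
    show @dist (Mod M M τ id) _ (τ⁻¹ x) (τ⁻¹ y) = @dist M _ x y
    rw [Mod.dist_eq (τ := τ) (goodF_id hC) (x := τ⁻¹ x) (y := τ⁻¹ y)]
    unfold modDist
    simp



/-- Uniqueness of labelings. -/
theorem labeling_unique {c : ℝ} (hC : Consts M c)
    (h3 : ∀ a b : M, ∃ d : M, d ≠ a ∧ d ≠ b)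
    {X : Type} [MetricSpace X] {f f' : X → M} {k k' : ℝ}
    (hsum : k + k' < c) (hfs : Function.Surjective f)
    (hfd : ∀ x y : X, |dist x y - dist (f x) (f y)| ≤ k)
    (hf'd : ∀ x y : X, |dist x y - dist (f' x) (f' y)| ≤ k') : f = f' := by
  have hcp := hC.pos
  have E : ∀ x y : X, dist (f x) (f y) = dist (f' x) (f' y) := by
    intro x y
    have h1 := abs_le.1 (hfd x y)
    have h2 := abs_le.1 (hf'd x y)
    have hk : |dist (f x) (f y) - dist (f' x) (f' y)| ≤ k + k' := by
      rw [abs_le]; constructor <;> linarith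
    by_cases hd1 : f x = f y <;> by_cases hd2 : f' x = f' y
    · rw [hd1, hd2]; simp
    · exfalso
      have hs := hC.sep _ _ hd2
      rw [hd1, dist_self] at hk
      rw [abs_le] at hk
      linarith [hk.1]
    · exfalso
      have hs := hC.sep _ _ hd1
      rw [hd2, dist_self] at hk
      rw [abs_le] at hk
      linarith [hk.2]
    · by_cases hp : ({f x, f y} : Set M) = {f' x, f' y}
      · rcases Set.pair_eq_pair_iff.1 hp with ⟨ha, hb⟩ | ⟨ha, hb⟩
        · rw [ha, hb]
        · rw [ha, hb, dist_comm]
      · exact absurd (le_trans (hC.gap _ _ _ _ hd1 hd2 hp) hk) (by linarith)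
  have hzero : ∀ x y : X, (f x = f y ↔ f' x = f' y) := by
    intro x y
    rw [← dist_eq_zero, ← @dist_eq_zero _ _ (f' x), E x y]
  funext x
  by_contra hne
  obtain ⟨x₁, hx₁⟩ := hfs (f' x)
  have h1 : f x₁ ≠ f x := by rw [hx₁]; exact fun h => hne h.symm
  have h1' : f' x₁ ≠ f' x := fun h => h1 ((hzero x₁ x).2 h)
  have hpair1 : ({f x, f x₁} : Set M) = {f' x, f' x₁} := by
    by_contra hp
    have := hC.gap (f x) (f x₁) (f' x) (f' x₁) (Ne.symm h1) (Ne.symm h1') hp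
    rw [E x x₁, sub_self, abs_zero] at this
    linarith
  have hfx : f x = f' x₁ := by
    have hmem : f x ∈ ({f' x, f' x₁} : Set M) := hpair1 ▸ Set.mem_insert _ _
    rcases hmem with h | h
    · exact absurd h hne
    · exact h
  obtain ⟨m₃, hm₃a, hm₃b⟩ := h3 (f x) (f' x)
  obtain ⟨x₂, hx₂⟩ := hfs m₃
  have h2 : f x₂ ≠ f x := by rw [hx₂]; exact hm₃a
  have h2' : f' x₂ ≠ f' x := fun h => h2 ((hzero x₂ x).2 h)
  have hpair2 : ({f x, f x₂} : Set M) = {f' x, f' x₂} := by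
    by_contra hp
    have := hC.gap (f x) (f x₂) (f' x) (f' x₂) (Ne.symm h2) (Ne.symm h2') hp
    rw [E x x₂, sub_self, abs_zero] at this
    linarith
  have hfx2 : f x = f' x₂ := by
    have hmem : f x ∈ ({f' x, f' x₂} : Set M) := hpair2 ▸ Set.mem_insert _ _
    rcases hmem with h | h
    · exact absurd h hne
    · exact h
  have h12 : f x₁ ≠ f x₂ := by
    rw [hx₁, hx₂]
    exact fun h => hm₃b h.symm
  exact h12 ((hzero x₁ x₂).2 (by rw [← hfx, ← hfx2]))

/-- Existence of labelings for spaces close to `M`. -/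
theorem exists_labeling [Fintype M] [Nonempty M] {c ε : ℝ} (hC : Consts M c)
    (hεc : 2 * ε ≤ c)
    (X : Type) [MetricSpace X] [CompactSpace X] [Nonempty X]
    (h : GromovHausdorff.ghDist X M < ε) :
    ∃ f : X → M, Function.Surjective f ∧
      ∀ x y : X, |dist x y - dist (f x) (f y)| ≤ 2 * ε := by
  classical
  set Z := GromovHausdorff.OptimalGHCoupling X M
  set l := GromovHausdorff.optimalGHInjl X M with hl_def
  set r := GromovHausdorff.optimalGHInjr X M with hr_def
  have hl : Isometry l := GromovHausdorff.isometry_optimalGHInjl X M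
  have hr : Isometry r := GromovHausdorff.isometry_optimalGHInjr X M
  have hH : Metric.hausdorffDist (Set.range l) (Set.range r) < ε := by
    rw [GromovHausdorff.hausdorffDist_optimal]; exact h
  have fin : EMetric.hausdorffEdist (Set.range l) (Set.range r) ≠ ⊤ :=
    Metric.hausdorffEdist_ne_top_of_nonempty_of_bounded (Set.range_nonempty _)
      (Set.range_nonempty _) (isCompact_range hl.continuous).isBounded
      (isCompact_range hr.continuous).isBounded
  have near : ∀ x : X, ∃ m : M, dist (l x) (r m) < ε := by
    intro x
    obtain ⟨z, hz, hzd⟩ := Metric.exists_dist_lt_of_hausdorffDist_lt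
      (Set.mem_range_self x) hH fin
    obtain ⟨m, rfl⟩ := hz
    exact ⟨m, hzd⟩
  choose f hf using near
  refine ⟨f, ?_, ?_⟩
  · intro m
    obtain ⟨z, hz, hzd⟩ := Metric.exists_dist_lt_of_hausdorffDist_lt'
      (Set.mem_range_self m) hH fin
    obtain ⟨x, rfl⟩ := hz
    refine ⟨x, ?_⟩
    by_contra hne
    have hs := hC.sep _ _ hne
    have h1 : dist (r (f x)) (r m) ≤ dist (r (f x)) (l x) + dist (l x) (r m) :=
      dist_triangle _ _ _
    rw [dist_comm (r (f x)) (l x)] at h1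
    have h2 := hf x
    have h3 : dist (f x) m = dist (r (f x)) (r m) := (hr.dist_eq _ _).symm
    linarith
  · intro x y
    have h1 : dist x y = dist (l x) (l y) := (hl.dist_eq _ _).symm
    have h2 : dist (f x) (f y) = dist (r (f x)) (r (f y)) := (hr.dist_eq _ _).symm
    rw [h1, h2, ← Real.dist_eq]
    calc dist (dist (l x) (l y)) (dist (r (f x)) (r (f y)))
        ≤ dist (l x) (r (f x)) + dist (l y) (r (f y)) := dist_dist_dist_le _ _ _ _
      _ ≤ 2 * ε := by linarith [hf x, hf y]



section SumSpace

variable {X Y Z : Type} [MetricSpace X] [MetricSpace Y] [MetricSpace Z]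

/-- The indicator part of the glued distance. -/
def wInd (η : ℝ) (w w₂ : X ⊕ Y) : ℝ := if w.isLeft = w₂.isLeft then 0 else η

/-- The glued distance on `X ⊕ Y`. -/
def wDist (l : X → Z) (r : Y → Z) (f : X → M) (g : Y → M) (τ : Equiv.Perm M) (η : ℝ)
    (w w₂ : X ⊕ Y) : ℝ :=
  (dist (Sum.elim l r w) (Sum.elim l r w₂) + wInd η w w₂) +
    (dist (τ (Sum.elim f g w)) (τ (Sum.elim f g w₂)) -
      dist (Sum.elim f g w) (Sum.elim f g w₂))

theorem wInd_nonneg {η : ℝ} (hη : 0 ≤ η) (w w₂ : X ⊕ Y) : 0 ≤ wInd η w w₂ := by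
  unfold wInd; split_ifs <;> linarith

theorem wInd_comm (η : ℝ) (w w₂ : X ⊕ Y) : wInd η w w₂ = wInd η w₂ w := by
  unfold wInd
  by_cases h : w.isLeft = w₂.isLeft
  · rw [if_pos h, if_pos h.symm]
  · rw [if_neg h, if_neg (fun hh => h hh.symm)]

theorem wInd_tri {η : ℝ} (hη : 0 ≤ η) (w₁ w₂ w₃ : X ⊕ Y) :
    wInd η w₁ w₃ ≤ wInd η w₁ w₂ + wInd η w₂ w₃ := by
  unfold wInd
  by_cases h12 : w₁.isLeft = w₂.isLeft
  · by_cases h23 : w₂.isLeft = w₃.isLeft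
    · rw [if_pos h12, if_pos h23, if_pos (h12.trans h23)]; norm_num
    · rw [if_pos h12, if_neg h23, if_neg (fun h => h23 (h12.symm.trans h))]; linarith
  · have h1 : (if w₁.isLeft = w₃.isLeft then (0:ℝ) else η) ≤ η := by
      split_ifs <;> linarith
    have h2 : (0:ℝ) ≤ if w₂.isLeft = w₃.isLeft then (0:ℝ) else η := by
      split_ifs <;> linarith
    rw [if_neg h12]
    linarith

/-- The glued metric space structure on `X ⊕ Y`. -/
def wMS {c k η : ℝ} (hC : Consts M c) (hk0 : 0 ≤ k) (h3k : 3 * k ≤ c) (hη0 : 0 < η)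
    (l : X → Z) (r : Y → Z) (f : X → M) (g : Y → M) (τ : Equiv.Perm M)
    (hl : Isometry l) (hr : Isometry r)
    (hed : ∀ w w₂ : X ⊕ Y,
      |(dist (Sum.elim l r w) (Sum.elim l r w₂) + wInd η w w₂) -
        dist (Sum.elim f g w) (Sum.elim f g w₂)| ≤ k) :
    MetricSpace (X ⊕ Y) where
  dist := wDist l r f g τ η
  dist_self w := by
    show wDist l r f g τ η w w = 0
    unfold wDist wInd
    simp
  dist_comm w w₂ := by
    show wDist l r f g τ η w w₂ = wDist l r f g τ η w₂ w
    unfold wDist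
    rw [wInd_comm, dist_comm (Sum.elim l r w), dist_comm (Sum.elim f g w),
      dist_comm (τ (Sum.elim f g w))]
  dist_triangle x y z :=
    key_tri hC hk0 h3k
      (fun w w₂ => dist (Sum.elim l r w) (Sum.elim l r w₂) + wInd η w w₂)
      (fun a b c' => by
        show dist (Sum.elim l r a) (Sum.elim l r c') + wInd η a c' ≤
          (dist (Sum.elim l r a) (Sum.elim l r b) + wInd η a b) +
            (dist (Sum.elim l r b) (Sum.elim l r c') + wInd η b c')
        have := dist_triangle (Sum.elim l r a) (Sum.elim l r b) (Sum.elim l r c')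
        have := wInd_tri (le_of_lt hη0) a b c'
        linarith)
      (Sum.elim f g) hed τ x y z
  eq_of_dist_eq_zero := by
    intro w w₂ h0
    have h0 : wDist l r f g τ η w w₂ = 0 := h0
    have hcp := hC.pos
    by_cases hF : Sum.elim f g w = Sum.elim f g w₂
    · unfold wDist at h0
      rw [hF] at h0
      simp only [dist_self, sub_self, add_zero] at h0
      have hd0 : 0 ≤ dist (Sum.elim l r w) (Sum.elim l r w₂) := dist_nonneg
      have hi0 : 0 ≤ wInd η w w₂ := wInd_nonneg (le_of_lt hη0) w w₂
      have hdz : dist (Sum.elim l r w) (Sum.elim l r w₂) = 0 := by linarith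
      have hiz : wInd η w w₂ = 0 := by linarith
      rcases w with x | y <;> rcases w₂ with x₂ | y₂
      · simp only [Sum.elim_inl] at hdz
        rw [hl.dist_eq] at hdz
        rw [dist_eq_zero.1 hdz]
      · exfalso
        unfold wInd at hiz
        rw [if_neg (by simp)] at hiz
        linarith
      · exfalso
        unfold wInd at hiz
        rw [if_neg (by simp)] at hiz
        linarith
      · simp only [Sum.elim_inr] at hdz
        rw [hr.dist_eq] at hdz
        rw [dist_eq_zero.1 hdz]
    · exfalso
      have hp : c - k ≤ (dist (Sum.elim l r w) (Sum.elim l r w₂) + wInd η w w₂) +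
          (dist (τ (Sum.elim f g w)) (τ (Sum.elim f g w₂)) -
            dist (Sum.elim f g w) (Sum.elim f g w₂)) :=
        key_pos hC
          (fun w w₂ => dist (Sum.elim l r w) (Sum.elim l r w₂) + wInd η w w₂)
          (Sum.elim f g) hed τ hF
      unfold wDist at h0
      linarith

end SumSpace



theorem ghDist_eq' (X Y : Type) [MetricSpace X] [CompactSpace X] [Nonempty X]
    [MetricSpace Y] [CompactSpace Y] [Nonempty Y] :
    ghDist X Y = dist (toGHSpace X) (toGHSpace Y) := rfl

theorem ghDist_nonneg' (X Y : Type) [MetricSpace X] [CompactSpace X] [Nonempty X]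
    [MetricSpace Y] [CompactSpace Y] [Nonempty Y] : 0 ≤ ghDist X Y := by
  rw [ghDist_eq']; exact dist_nonneg

/-- The key inequality: modification does not increase the GH distance. -/
theorem ghDist_mod_le [Fintype M] [Nonempty M] {c ε : ℝ} (hC : Consts M c)
    (hε0 : 0 < ε) (hεc : 1000 * ε ≤ c)
    (h3 : ∀ a b : M, ∃ d : M, d ≠ a ∧ d ≠ b)
    (X Y : Type) [MetricSpace X] [CompactSpace X] [Nonempty X]
    [MetricSpace Y] [CompactSpace Y] [Nonempty Y] (τ : Equiv.Perm M)
    {f : X → M} {g : Y → M}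
    (hfs : Surjective f) (hfd : ∀ x y : X, |dist x y - dist (f x) (f y)| ≤ 2 * ε)
    (hgs : Surjective g) (hgd : ∀ x y : Y, |dist x y - dist (g x) (g y)| ≤ 2 * ε)
    (hXY : ghDist X Y ≤ 4 * ε) :
    ghDist (Mod M X τ f) (Mod M Y τ g) ≤ ghDist X Y := by
  have hcp := hC.pos
  have hGf : GoodF M X f := goodF_of hC (le_of_lt hε0) (by linarith) hfd
  have hGg : GoodF M Y g := goodF_of hC (le_of_lt hε0) (by linarith) hgd
  refine le_of_forall_pos_le_add fun η hη => ?_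
  set η' := min η ε with hη'def
  have hη'0 : 0 < η' := lt_min hη hε0
  have hη'ε : η' ≤ ε := min_le_right _ _
  have hη'η : η' ≤ η := min_le_left _ _
  suffices h : ghDist (Mod M X τ f) (Mod M Y τ g) ≤ ghDist X Y + η' by linarith
  set ρ := ghDist X Y with hρdef
  have hρ0 : 0 ≤ ρ := ghDist_nonneg' X Y
  set Z := OptimalGHCoupling X Y with hZdef
  set l := optimalGHInjl X Y with hldef
  set r := optimalGHInjr X Y with hrdef
  have hl : Isometry l := isometry_optimalGHInjl X Y
  have hr : Isometry r := isometry_optimalGHInjr X Y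
  have hH : hausdorffDist (range l) (range r) = ρ := hausdorffDist_optimal
  have fin : EMetric.hausdorffEdist (range l) (range r) ≠ ⊤ :=
    hausdorffEdist_ne_top_of_nonempty_of_bounded (range_nonempty _)
      (range_nonempty _) (isCompact_range hl.continuous).isBounded
      (isCompact_range hr.continuous).isBounded
  have nearX : ∀ x : X, ∃ y : Y, dist (l x) (r y) ≤ ρ := by
    intro x
    have h1 : infDist (l x) (range r) ≤ ρ := by
      rw [← hH]; exact infDist_le_hausdorffDist_of_mem (mem_range_self x) fin
    obtain ⟨z, hz, hzd⟩ :=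
      (isCompact_range hr.continuous).exists_infDist_eq_dist (range_nonempty _) (l x)
    obtain ⟨y, rfl⟩ := hz
    exact ⟨y, hzd ▸ h1⟩
  have nearY : ∀ y : Y, ∃ x : X, dist (l x) (r y) ≤ ρ := by
    intro y
    have h1 : infDist (r y) (range l) ≤ ρ := by
      rw [← hH, hausdorffDist_comm]
      exact infDist_le_hausdorffDist_of_mem (mem_range_self y)
        (by rwa [EMetric.hausdorffEdist_comm])
    obtain ⟨z, hz, hzd⟩ :=
      (isCompact_range hl.continuous).exists_infDist_eq_dist (range_nonempty _) (r y)
    obtain ⟨x, rfl⟩ := hz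
    exact ⟨x, by rw [dist_comm]; exact hzd ▸ h1⟩
  choose nY hnY using nearX
  choose nX hnX using nearY
  -- the composed labeling of `Y` agrees with `g`
  have hdY : ∀ y y₂ : Y, |dist y y₂ - dist (f (nX y)) (f (nX y₂))| ≤ 2 * ρ + 2 * ε := by
    intro y y₂
    have e1 : dist y y₂ = dist (r y) (r y₂) := (hr.dist_eq _ _).symm
    have e2 : dist (nX y) (nX y₂) = dist (l (nX y)) (l (nX y₂)) := (hl.dist_eq _ _).symm
    have h1 : |dist (r y) (r y₂) - dist (l (nX y)) (l (nX y₂))| ≤ 2 * ρ := by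
      rw [← Real.dist_eq]
      calc dist (dist (r y) (r y₂)) (dist (l (nX y)) (l (nX y₂)))
          ≤ dist (r y) (l (nX y)) + dist (r y₂) (l (nX y₂)) := dist_dist_dist_le _ _ _ _
        _ ≤ 2 * ρ := by
            have := hnX y; have := hnX y₂
            rw [dist_comm (r y) (l (nX y)), dist_comm (r y₂) (l (nX y₂))]
            linarith
    have h2 := abs_le.1 (hfd (nX y) (nX y₂))
    rw [← e1, ← e2] at h1
    have h1' := abs_le.1 h1
    rw [abs_le]
    constructor <;> linarith
  have hgf : g = fun y => f (nX y) :=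
    labeling_unique hC h3 (by linarith : 2 * ε + (2 * ρ + 2 * ε) < c) hgs hgd hdY
  have transfer : ∀ (x : X) (y : Y), dist (l x) (r y) ≤ ρ → f x = g y := by
    intro x y hxy
    have h1 : dist x (nX y) ≤ 2 * ρ := by
      rw [← hl.dist_eq (y := nX y)]
      calc dist (l x) (l (nX y)) ≤ dist (l x) (r y) + dist (r y) (l (nX y)) :=
            dist_triangle _ _ _
        _ ≤ 2 * ρ := by
            have := hnX y; rw [dist_comm (r y) (l (nX y))]; linarith
    have h2 := abs_le.1 (hfd x (nX y))
    have h3' : dist (f x) (f (nX y)) < c := by linarith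
    have heq : f x = f (nX y) := by
      by_contra hne
      exact absurd (hC.sep _ _ hne) (not_le.2 h3')
    rw [heq, hgf]
  -- cross distortion
  have hcross : ∀ (x : X) (y : Y), |dist (l x) (r y) - dist (f x) (g y)| ≤ ρ + 2 * ε := by
    intro x y
    have e2 : dist (g y) (f (nX y)) = 0 := by rw [hgf]; simp
    have hg2 : g y = f (nX y) := by rw [hgf]
    have h1 : |dist (l x) (r y) - dist (l x) (l (nX y))| ≤ ρ := by
      rw [← Real.dist_eq]
      calc dist (dist (l x) (r y)) (dist (l x) (l (nX y)))
          ≤ dist (l x) (l x) + dist (r y) (l (nX y)) := dist_dist_dist_le _ _ _ _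
        _ ≤ ρ := by
            have := hnX y; rw [dist_self, dist_comm (r y) (l (nX y))]; linarith
    have h2 : |dist (x) (nX y) - dist (f x) (f (nX y))| ≤ 2 * ε := hfd _ _
    rw [hl.dist_eq] at h1
    rw [hg2]
    have h1' := abs_le.1 h1
    have h2' := abs_le.1 h2
    rw [abs_le]
    constructor <;> linarith
  -- distortion of the sum labeling
  have hed : ∀ w w₂ : X ⊕ Y,
      |(dist (Sum.elim l r w) (Sum.elim l r w₂) + wInd η' w w₂) -
        dist (Sum.elim f g w) (Sum.elim f g w₂)| ≤ 7 * ε := by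
    intro w w₂
    rcases w with x | y <;> rcases w₂ with x₂ | y₂
    · simp only [Sum.elim_inl, wInd, Sum.isLeft_inl, if_pos]
      rw [hl.dist_eq, add_zero]
      have := abs_le.1 (hfd x x₂)
      rw [abs_le]; constructor <;> linarith
    · simp only [Sum.elim_inl, Sum.elim_inr, wInd, Sum.isLeft_inl, Sum.isLeft_inr]
      simp only [Bool.true_eq_false, ↓reduceIte]
      have := abs_le.1 (hcross x y₂)
      rw [abs_le]; constructor <;> linarith
    · simp only [Sum.elim_inl, Sum.elim_inr, wInd, Sum.isLeft_inl, Sum.isLeft_inr]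
      simp only [Bool.false_eq_true, ↓reduceIte]
      have h1 := abs_le.1 (hcross x₂ y)
      rw [dist_comm (r y) (l x₂), dist_comm (g y) (f x₂)]
      rw [abs_le]; constructor <;> linarith
    · simp only [Sum.elim_inr, wInd, Sum.isLeft_inr, if_pos]
      rw [hr.dist_eq, add_zero]
      have := abs_le.1 (hgd y y₂)
      rw [abs_le]; constructor <;> linarith
  letI WMS : MetricSpace (X ⊕ Y) :=
    wMS hC (by linarith : (0:ℝ) ≤ 7 * ε) (by linarith) hη'0 l r f g τ hl hr hed
  have Il : Isometry (fun x : Mod M X τ f => (Sum.inl x : X ⊕ Y)) := by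
    apply Isometry.of_dist_eq
    rintro (a : X) (b : X)
    show wDist l r f g τ η' (Sum.inl a) (Sum.inl b) = _
    rw [Mod.dist_eq (τ := τ) hGf (x := a) (y := b)]
    unfold wDist wInd modDist
    simp only [Sum.elim_inl, Sum.isLeft_inl, if_pos]
    rw [hl.dist_eq, add_zero]
  have Ir : Isometry (fun y : Mod M Y τ g => (Sum.inr y : X ⊕ Y)) := by
    apply Isometry.of_dist_eq
    rintro (a : Y) (b : Y)
    show wDist l r f g τ η' (Sum.inr a) (Sum.inr b) = _
    rw [Mod.dist_eq (τ := τ) hGg (x := a) (y := b)]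
    unfold wDist wInd modDist
    simp only [Sum.elim_inr, Sum.isLeft_inr, if_pos]
    rw [hr.dist_eq, add_zero]
  have hHD : hausdorffDist (range (fun x : Mod M X τ f => (Sum.inl x : X ⊕ Y)))
      (range (fun y : Mod M Y τ g => (Sum.inr y : X ⊕ Y))) ≤ ρ + η' := by
    apply hausdorffDist_le_of_mem_dist (by linarith)
    · rintro _ ⟨(x : X), rfl⟩
      refine ⟨Sum.inr (nY x), mem_range_self _, ?_⟩
      have hlab : f x = g (nY x) := transfer x (nY x) (hnY x)
      show wDist l r f g τ η' (Sum.inl x) (Sum.inr (nY x)) ≤ ρ + η'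
      unfold wDist wInd
      simp only [Sum.elim_inl, Sum.elim_inr, Sum.isLeft_inl, Sum.isLeft_inr]
      simp only [Bool.true_eq_false, ↓reduceIte]; rw [hlab]
      simp only [dist_self, sub_self, add_zero]
      have := hnY x
      linarith
    · rintro _ ⟨(y : Y), rfl⟩
      refine ⟨Sum.inl (nX y), mem_range_self _, ?_⟩
      have hlab : f (nX y) = g y := transfer (nX y) y (hnX y)
      show wDist l r f g τ η' (Sum.inr y) (Sum.inl (nX y)) ≤ ρ + η'
      unfold wDist wInd
      simp only [Sum.elim_inl, Sum.elim_inr, Sum.isLeft_inl, Sum.isLeft_inr]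
      simp only [Bool.false_eq_true, ↓reduceIte]; rw [hlab]
      simp only [dist_self, sub_self, add_zero]
      have := hnX y
      rw [dist_comm]
      linarith
  calc ghDist (Mod M X τ f) (Mod M Y τ g)
      ≤ hausdorffDist (range (fun x : Mod M X τ f => (Sum.inl x : X ⊕ Y)))
        (range (fun y : Mod M Y τ g => (Sum.inr y : X ⊕ Y))) :=
        ghDist_le_hausdorffDist Il Ir
    _ ≤ ρ + η' := hHD



theorem tau_f_surj {X : Type} {f : X → M} (τ : Equiv.Perm M) (hfs : Surjective f) :
    Surjective (fun x : X => τ (f x)) := fun m => by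
  obtain ⟨x, hx⟩ := hfs (τ⁻¹ m)
  exact ⟨x, by simp only []; rw [hx]; simp⟩

/-- Modification preserves GH distances (both directions). -/
theorem ghDist_mod_eq [Fintype M] [Nonempty M] {c ε : ℝ} (hC : Consts M c)
    (hε0 : 0 < ε) (hεc : 1000 * ε ≤ c)
    (h3 : ∀ a b : M, ∃ d : M, d ≠ a ∧ d ≠ b)
    (X Y : Type) [MetricSpace X] [CompactSpace X] [Nonempty X]
    [MetricSpace Y] [CompactSpace Y] [Nonempty Y] (τ : Equiv.Perm M)
    {f : X → M} {g : Y → M}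
    (hfs : Surjective f) (hfd : ∀ x y : X, |dist x y - dist (f x) (f y)| ≤ 2 * ε)
    (hgs : Surjective g) (hgd : ∀ x y : Y, |dist x y - dist (g x) (g y)| ≤ 2 * ε)
    (hXY : ghDist X Y ≤ 4 * ε) :
    ghDist (Mod M X τ f) (Mod M Y τ g) = ghDist X Y := by
  have hle := ghDist_mod_le hC hε0 hεc h3 X Y τ hfs hfd hgs hgd hXY
  refine le_antisymm hle ?_
  have hGf : GoodF M X f := goodF_of hC (le_of_lt hε0) (by linarith) hfd
  have hGg : GoodF M Y g := goodF_of hC (le_of_lt hε0) (by linarith) hgd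
  have hfd' := mod_labeling (τ := τ) hGf hfd
  have hgd' := mod_labeling (τ := τ) hGg hgd
  have hGf' : GoodF M (Mod M X τ f) (fun x => τ (f x)) :=
    goodF_of hC (le_of_lt hε0) (by linarith) hfd'
  have hGg' : GoodF M (Mod M Y τ g) (fun y => τ (g y)) :=
    goodF_of hC (le_of_lt hε0) (by linarith) hgd'
  have h1 : ghDist (Mod M X τ f) (Mod M Y τ g) ≤ 4 * ε := le_trans hle hXY
  have h2 := ghDist_mod_le hC hε0 hεc h3 (Mod M X τ f) (Mod M Y τ g) τ⁻¹
    (tau_f_surj τ hfs) hfd' (tau_f_surj τ hgs) hgd' h1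
  have e1 : toGHSpace (Mod M (Mod M X τ f) τ⁻¹ (fun x => τ (f x))) = toGHSpace X := by
    have s1 : toGHSpace (Mod M (Mod M X τ f) τ⁻¹ (fun x => τ (f x))) =
        toGHSpace (Mod M X (τ⁻¹ * τ) f) :=
      toGHSpace_eq_toGHSpace_iff_isometryEquiv.2 ⟨modModIso τ⁻¹ τ f hGf hGf'⟩
    rw [s1, inv_mul_cancel τ]
    exact toGHSpace_eq_toGHSpace_iff_isometryEquiv.2 ⟨modOneIso f hGf⟩
  have e2 : toGHSpace (Mod M (Mod M Y τ g) τ⁻¹ (fun y => τ (g y))) = toGHSpace Y := by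
    have s1 : toGHSpace (Mod M (Mod M Y τ g) τ⁻¹ (fun y => τ (g y))) =
        toGHSpace (Mod M Y (τ⁻¹ * τ) g) :=
      toGHSpace_eq_toGHSpace_iff_isometryEquiv.2 ⟨modModIso τ⁻¹ τ g hGg hGg'⟩
    rw [s1, inv_mul_cancel τ]
    exact toGHSpace_eq_toGHSpace_iff_isometryEquiv.2 ⟨modOneIso g hGg⟩
  have e3 : ghDist (Mod M (Mod M X τ f) τ⁻¹ (fun x => τ (f x)))
      (Mod M (Mod M Y τ g) τ⁻¹ (fun y => τ (g y))) = ghDist X Y := by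
    rw [ghDist_eq', e1, e2, ← ghDist_eq']
  rw [← e3]
  exact h2

/-- `M` modified by `τ` with the identity labeling is isometric to `M`. -/
theorem toGHSpace_mod_self [CompactSpace M] [Nonempty M] {c : ℝ} (hC : Consts M c)
    (τ : Equiv.Perm M) : toGHSpace (Mod M M τ id) = toGHSpace M :=
  toGHSpace_eq_toGHSpace_iff_isometryEquiv.2 ⟨(modSelfIso hC τ).symm⟩

theorem id_labeling {ε : ℝ} (hε0 : 0 ≤ ε) :
    ∀ x y : M, |dist x y - dist (id x) (id y)| ≤ 2 * ε := by
  intro x y; simp only [id]; rw [sub_self, abs_zero]; linarith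

/-- Modification keeps the GH distance to `M` unchanged. -/
theorem ghDist_mod_M [Fintype M] [Nonempty M] {c ε : ℝ} (hC : Consts M c)
    (hε0 : 0 < ε) (hεc : 1000 * ε ≤ c)
    (h3 : ∀ a b : M, ∃ d : M, d ≠ a ∧ d ≠ b)
    (X : Type) [MetricSpace X] [CompactSpace X] [Nonempty X] (τ : Equiv.Perm M)
    {f : X → M}
    (hfs : Surjective f) (hfd : ∀ x y : X, |dist x y - dist (f x) (f y)| ≤ 2 * ε)
    (hXM : ghDist X M ≤ 4 * ε) :
    ghDist (Mod M X τ f) M = ghDist X M := by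
  have h := ghDist_mod_eq hC hε0 hεc h3 X M τ hfs hfd surjective_id
    (id_labeling (le_of_lt hε0)) hXM
  rw [← h, ghDist_eq', ghDist_eq' (Mod M X τ f) (Mod M M τ id),
    toGHSpace_mod_self hC τ]



section GHLevel

variable [Fintype M] [Nonempty M] {c ε : ℝ}

theorem ghdist_rep_lt {p : GHSpace} (hp : p ∈ Metric.ball (toGHSpace M) ε) :
    ghDist p.Rep M < ε := by
  rw [mem_ball] at hp
  rw [ghDist_eq', p.toGHSpace_rep]
  exact hp

/-- The chosen labeling of a representative. -/
def lab (hC : Consts M c) (hε0 : 0 < ε) (hεc : 1000 * ε ≤ c)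
    (p : GHSpace) (hp : ghDist p.Rep M < ε) : p.Rep → M :=
  Classical.choose (exists_labeling hC (by nlinarith [hC.pos] : 2 * ε ≤ c) p.Rep hp)

theorem lab_spec (hC : Consts M c) (hε0 : 0 < ε) (hεc : 1000 * ε ≤ c)
    (p : GHSpace) (hp : ghDist p.Rep M < ε) :
    Surjective (lab hC hε0 hεc p hp) ∧
      ∀ x y : p.Rep, |dist x y - dist (lab hC hε0 hεc p hp x) (lab hC hε0 hεc p hp y)| ≤ 2 * ε :=
  Classical.choose_spec (exists_labeling hC (by nlinarith [hC.pos] : 2 * ε ≤ c) p.Rep hp)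

variable (hC : Consts M c) (hε0 : 0 < ε) (hεc : 1000 * ε ≤ c)
  (h3 : ∀ a b : M, ∃ d : M, d ≠ a ∧ d ≠ b)

include hC hε0 hεc h3

theorem mod_mem (A : Type) [MetricSpace A] [CompactSpace A] [Nonempty A]
    (τ : Equiv.Perm M) {f : A → M} (hA : ghDist A M < ε)
    (hfs : Surjective f) (hfd : ∀ x y : A, |dist x y - dist (f x) (f y)| ≤ 2 * ε) :
    toGHSpace (Mod M A τ f) ∈ Metric.ball (toGHSpace M) ε := by
  rw [mem_ball, ← ghDist_eq']
  rw [ghDist_mod_M hC hε0 hεc h3 A τ hfs hfd (by linarith : ghDist A M ≤ 4 * ε)]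
  exact hA

/-- The action of `τ` on the ball. -/
def Fmap (τ : Equiv.Perm M) (p : ↥(Metric.ball (toGHSpace M) ε)) :
    ↥(Metric.ball (toGHSpace M) ε) :=
  ⟨toGHSpace (Mod M p.1.Rep τ (lab hC hε0 hεc p.1 (ghdist_rep_lt p.2))),
    mod_mem hC hε0 hεc h3 p.1.Rep τ (ghdist_rep_lt p.2)
      (lab_spec hC hε0 hεc p.1 (ghdist_rep_lt p.2)).1
      (lab_spec hC hε0 hεc p.1 (ghdist_rep_lt p.2)).2⟩

/-- Characterization of `Fmap` on any concrete representative. -/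
theorem Fmap_eq (τ : Equiv.Perm M) (A : Type) [MetricSpace A] [CompactSpace A]
    [Nonempty A] {f : A → M}
    (hfs : Surjective f) (hfd : ∀ x y : A, |dist x y - dist (f x) (f y)| ≤ 2 * ε)
    (q : ↥(Metric.ball (toGHSpace M) ε)) (hq : q.1 = toGHSpace A) :
    (Fmap hC hε0 hεc h3 τ q).1 = toGHSpace (Mod M A τ f) := by
  have hiso : toGHSpace q.1.Rep = toGHSpace A := by rw [q.1.toGHSpace_rep, hq]
  obtain ⟨Φ⟩ := toGHSpace_eq_toGHSpace_iff_isometryEquiv.1 hiso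
  have hspec := lab_spec hC hε0 hεc q.1 (ghdist_rep_lt q.2)
  have hcomp_d : ∀ x y : q.1.Rep, |dist x y - dist (f (Φ x)) (f (Φ y))| ≤ 2 * ε := by
    intro x y
    rw [← Φ.dist_eq x y]
    exact hfd (Φ x) (Φ y)
  have hcomp_s : Surjective (fun x : q.1.Rep => f (Φ x)) := hfs.comp Φ.surjective
  have huniq : lab hC hε0 hεc q.1 (ghdist_rep_lt q.2) = fun x => f (Φ x) :=
    labeling_unique hC h3 (by linarith [hC.pos] : 2 * ε + 2 * ε < c)
      hspec.1 hspec.2 hcomp_d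
  show toGHSpace (Mod M q.1.Rep τ (lab hC hε0 hεc q.1 (ghdist_rep_lt q.2))) =
    toGHSpace (Mod M A τ f)
  rw [huniq]
  have hGA : GoodF M q.1.Rep (fun x => f (Φ x)) :=
    goodF_of hC (le_of_lt hε0) (by linarith) hcomp_d
  have hGB : GoodF M A f := goodF_of hC (le_of_lt hε0) (by linarith) hfd
  exact toGHSpace_eq_toGHSpace_iff_isometryEquiv.2 ⟨modTransportIso Φ τ f hGA hGB⟩

theorem Fmap_one (p : ↥(Metric.ball (toGHSpace M) ε)) :
    Fmap hC hε0 hεc h3 1 p = p := by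
  apply Subtype.ext
  have hspec := lab_spec hC hε0 hεc p.1 (ghdist_rep_lt p.2)
  have hG : GoodF M p.1.Rep (lab hC hε0 hεc p.1 (ghdist_rep_lt p.2)) :=
    goodF_of hC (le_of_lt hε0) (by linarith [hC.pos]) hspec.2
  show toGHSpace (Mod M p.1.Rep 1 (lab hC hε0 hεc p.1 (ghdist_rep_lt p.2))) = p.1
  rw [toGHSpace_eq_toGHSpace_iff_isometryEquiv.2 ⟨modOneIso _ hG⟩, p.1.toGHSpace_rep]

theorem Fmap_comp (σ τ : Equiv.Perm M) (p : ↥(Metric.ball (toGHSpace M) ε)) :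
    Fmap hC hε0 hεc h3 σ (Fmap hC hε0 hεc h3 τ p) = Fmap hC hε0 hεc h3 (σ * τ) p := by
  apply Subtype.ext
  have hspec := lab_spec hC hε0 hεc p.1 (ghdist_rep_lt p.2)
  set fp := lab hC hε0 hεc p.1 (ghdist_rep_lt p.2) with hfp
  have hGp : GoodF M p.1.Rep fp := goodF_of hC (le_of_lt hε0) (by linarith [hC.pos]) hspec.2
  have hmd := mod_labeling (τ := τ) hGp hspec.2
  have hGp' : GoodF M (Mod M p.1.Rep τ fp) (fun x => τ (fp x)) :=
    goodF_of hC (le_of_lt hε0) (by linarith [hC.pos]) hmd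
  have h1 : (Fmap hC hε0 hεc h3 σ (Fmap hC hε0 hεc h3 τ p)).1 =
      toGHSpace (Mod M (Mod M p.1.Rep τ fp) σ (fun x => τ (fp x))) :=
    Fmap_eq hC hε0 hεc h3 σ (Mod M p.1.Rep τ fp) (tau_f_surj τ hspec.1) hmd
      (Fmap hC hε0 hεc h3 τ p) rfl
  rw [h1]
  show _ = toGHSpace (Mod M p.1.Rep (σ * τ) fp)
  exact toGHSpace_eq_toGHSpace_iff_isometryEquiv.2 ⟨modModIso σ τ fp hGp hGp'⟩

theorem Fmap_dist (τ : Equiv.Perm M) (p q : ↥(Metric.ball (toGHSpace M) ε)) :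
    dist (Fmap hC hε0 hεc h3 τ p).1 (Fmap hC hε0 hεc h3 τ q).1 = dist p.1 q.1 := by
  have hspecp := lab_spec hC hε0 hεc p.1 (ghdist_rep_lt p.2)
  have hspecq := lab_spec hC hε0 hεc q.1 (ghdist_rep_lt q.2)
  have hpq : dist p.1 q.1 ≤ 4 * ε := by
    have h1 : dist p.1 (toGHSpace M) < ε := mem_ball.1 p.2
    have h2 : dist q.1 (toGHSpace M) < ε := mem_ball.1 q.2
    have := dist_triangle p.1 (toGHSpace M) q.1
    rw [dist_comm (toGHSpace M) q.1] at this
    linarith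
  have hrep : dist p.1 q.1 = ghDist p.1.Rep q.1.Rep := dist_ghDist p.1 q.1
  show dist (toGHSpace (Mod M p.1.Rep τ _)) (toGHSpace (Mod M q.1.Rep τ _)) = _
  rw [← ghDist_eq']
  rw [ghDist_mod_eq hC hε0 hεc h3 p.1.Rep q.1.Rep τ hspecp.1 hspecp.2 hspecq.1 hspecq.2
    (by rw [← hrep]; exact hpq)]
  exact hrep.symm

end GHLevel



/-- Scaled copy of `M`. -/
def Sc (M : Type) (_δ : ℝ) : Type := M

variable (M) in
/-- To the scaled copy. -/
def Sc.of (δ : ℝ) (x : M) : Sc M δ := x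

variable (M) in
/-- From the scaled copy. -/
def Sc.un (δ : ℝ) (x : Sc M δ) : M := x

/-- The scaled distance. -/
def scDist (δ : ℝ) (x y : M) : ℝ := (1 + |δ|) * dist x y

instance scMS (δ : ℝ) : MetricSpace (Sc M δ) where
  dist x y := scDist δ (Sc.un M δ x) (Sc.un M δ y)
  dist_self x := by unfold scDist; simp
  dist_comm x y := by
    show scDist δ (Sc.un M δ x) (Sc.un M δ y) = scDist δ (Sc.un M δ y) (Sc.un M δ x)
    unfold scDist; rw [dist_comm]
  dist_triangle x y z := by
    show scDist δ (Sc.un M δ x) (Sc.un M δ z) ≤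
      scDist δ (Sc.un M δ x) (Sc.un M δ y) + scDist δ (Sc.un M δ y) (Sc.un M δ z)
    unfold scDist
    have h := dist_triangle (Sc.un M δ x) (Sc.un M δ y) (Sc.un M δ z)
    have h2 : (0:ℝ) ≤ 1 + |δ| := by positivity
    nlinarith
  eq_of_dist_eq_zero := by
    intro x y h
    have h' : scDist δ (Sc.un M δ x) (Sc.un M δ y) = 0 := h
    unfold scDist at h'
    have h2 : (0:ℝ) < 1 + |δ| := by positivity
    have h3 : dist (Sc.un M δ x) (Sc.un M δ y) = 0 := by
      rcases mul_eq_zero.1 h' with h'' | h''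
      · linarith
      · exact h''
    have := eq_of_dist_eq_zero h3
    exact this

theorem sc_dist (δ : ℝ) (x y : Sc M δ) :
    dist x y = (1 + |δ|) * dist (Sc.un M δ x) (Sc.un M δ y) := rfl

theorem continuous_sc (δ : ℝ) : Continuous (Sc.of M δ) := by
  rw [Metric.continuous_iff]
  intro b ε hε
  have h2 : (0:ℝ) < 1 + |δ| := by positivity
  refine ⟨ε / (1 + |δ|), by positivity, fun a hab => ?_⟩
  have : dist (Sc.of M δ a) (Sc.of M δ b) = (1 + |δ|) * dist a b := rfl
  rw [this]
  calc (1 + |δ|) * dist a b < (1 + |δ|) * (ε / (1 + |δ|)) :=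
        mul_lt_mul_of_pos_left hab h2
    _ = ε := by field_simp

instance (δ : ℝ) [CompactSpace M] : CompactSpace (Sc M δ) := by
  constructor
  have h : (Set.univ : Set (Sc M δ)) = (Sc.of M δ) '' Set.univ := by
    rw [Set.image_univ, Set.range_eq_univ.2 (fun y => ⟨y, rfl⟩ : Function.Surjective (Sc.of M δ))]
  rw [h]
  exact isCompact_univ.image (continuous_sc δ)

instance (δ : ℝ) [Nonempty M] : Nonempty (Sc M δ) := ‹Nonempty M›

theorem sc_labeling {δ D ε : ℝ} (hD : ∀ a b : M, dist a b ≤ D) (hδD : |δ| * D ≤ 2 * ε) :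
    ∀ x y : Sc M δ, |dist x y - dist (Sc.un M δ x) (Sc.un M δ y)| ≤ 2 * ε := by
  intro x y
  rw [sc_dist]
  have h1 : (1 + |δ|) * dist (Sc.un M δ x) (Sc.un M δ y) -
      dist (Sc.un M δ x) (Sc.un M δ y) = |δ| * dist (Sc.un M δ x) (Sc.un M δ y) := by
    ring
  rw [h1, abs_of_nonneg (by positivity)]
  have h2 := hD (Sc.un M δ x) (Sc.un M δ y)
  have h3 : (0:ℝ) ≤ |δ| := abs_nonneg _
  nlinarith [dist_nonneg (x := Sc.un M δ x) (y := Sc.un M δ y)]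

theorem sc_close [CompactSpace M] [Nonempty M] {δ D ε : ℝ} (hε0 : 0 < ε)
    (hD : ∀ a b : M, dist a b ≤ D) (hδD : |δ| * D ≤ ε) :
    ghDist (Sc M δ) M < ε := by
  have hδD0 : 0 ≤ |δ| * D := by
    have h1 : (0:ℝ) ≤ |δ| := abs_nonneg _
    have h2 : 0 ≤ D := le_trans dist_nonneg (hD (Classical.arbitrary M) (Classical.arbitrary M))
    positivity
  have h := ghDist_le_of_approx_subsets
    (X := Sc M δ) (Y := M) (s := (Set.univ : Set (Sc M δ)))
    (fun x => Sc.un M δ x.1) (ε₁ := 0) (ε₂ := |δ| * D) (ε₃ := 0)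
    (fun x => ⟨x, Set.mem_univ _, by rw [dist_self]⟩)
    (fun m => ⟨⟨Sc.of M δ m, Set.mem_univ _⟩, by show dist m m ≤ 0; rw [dist_self]⟩)
    (by
      intro x y
      rw [Subtype.dist_eq, sc_dist]
      have h1 : (1 + |δ|) * dist (Sc.un M δ x.1) (Sc.un M δ y.1) -
          dist (Sc.un M δ x.1) (Sc.un M δ y.1) =
          |δ| * dist (Sc.un M δ x.1) (Sc.un M δ y.1) := by ring
      rw [h1, abs_of_nonneg (by positivity)]
      have h2 := hD (Sc.un M δ x.1) (Sc.un M δ y.1)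
      have h3 : (0:ℝ) ≤ |δ| := abs_nonneg _
      nlinarith [dist_nonneg (x := Sc.un M δ x.1) (y := Sc.un M δ y.1)])
  calc ghDist (Sc M δ) M ≤ 0 + |δ| * D / 2 + 0 := h
    _ < ε := by linarith



end Stmt14

open GromovHausdorff Metric Set Function Stmt14 in
/-- for a finite metric space `M` with `n ≥ 3` points in general
position and all sufficiently small `ε > 0`, the isometry group of the ball
`U_ε(M)` in the Gromov--Hausdorff space contains a subgroup isomorphic to `Sₙ`:
there is an injective group homomorphism from the permutation group of the points
of `M` into the group of isometries of `U_ε(M)`. -/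
theorem stmt_14 (M : Type) [MetricSpace M] [Fintype M] [Nonempty M]
    (h3 : 3 ≤ Fintype.card M) (hGP : InGeneralPosition M) :
    ∃ ε₀ : ℝ, 0 < ε₀ ∧ ∀ ε : ℝ, 0 < ε → ε ≤ ε₀ →
      ∃ φ : Equiv.Perm M →*
          ((Metric.ball (GromovHausdorff.toGHSpace M) ε) ≃ᵢ
            (Metric.ball (GromovHausdorff.toGHSpace M) ε)),
        Function.Injective φ := by
  classical
  obtain ⟨c, hC⟩ := exists_consts hGP
  have h3' : ∀ a b : M, ∃ d : M, d ≠ a ∧ d ≠ b := exists_third h3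
  have hcp := hC.pos
  refine ⟨c / 1000, by positivity, ?_⟩
  intro ε hε0 hεbound
  have hεc : 1000 * ε ≤ c := by linarith
  let e : Equiv.Perm M → (↥(Metric.ball (toGHSpace M) ε) ≃ᵢ ↥(Metric.ball (toGHSpace M) ε)) :=
    fun τ =>
    { toEquiv := ⟨Fmap hC hε0 hεc h3' τ, Fmap hC hε0 hεc h3' τ⁻¹,
        fun p => by
          rw [Fmap_comp hC hε0 hεc h3' τ⁻¹ τ p, inv_mul_cancel, Fmap_one hC hε0 hεc h3' p],
        fun p => by
          rw [Fmap_comp hC hε0 hεc h3' τ τ⁻¹ p, mul_inv_cancel, Fmap_one hC hε0 hεc h3' p]⟩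
      isometry_toFun := Isometry.of_dist_eq fun p q => by
        rw [Subtype.dist_eq, Subtype.dist_eq]
        exact Fmap_dist hC hε0 hεc h3' τ p q }
  have hmul : ∀ σ τ : Equiv.Perm M, e (σ * τ) = e σ * e τ := by
    intro σ τ
    apply IsometryEquiv.ext
    intro p
    exact (Fmap_comp hC hε0 hεc h3' σ τ p).symm
  refine ⟨MonoidHom.mk' e hmul, ?_⟩
  rw [injective_iff_map_eq_one]
  intro τ hτ
  -- the scaled copy of M detects nontrivial permutations
  set D := Metric.diam (Set.univ : Set M) with hDdef
  have hD : ∀ a b : M, dist a b ≤ D := fun a b =>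
    Metric.dist_le_diam_of_mem isCompact_univ.isBounded (mem_univ a) (mem_univ b)
  have hD0 : 0 ≤ D := Metric.diam_nonneg
  set δ := ε / (D + 1) with hδdef
  have hδ0 : 0 < δ := by positivity
  have hδabs : |δ| = δ := abs_of_pos hδ0
  have hδD1 : |δ| * D ≤ ε := by
    rw [hδabs, hδdef]
    rw [div_mul_eq_mul_div, div_le_iff₀ (by linarith : (0:ℝ) < D + 1)]
    nlinarith
  have hδD2 : |δ| * D ≤ 2 * ε := by linarith
  have hin : toGHSpace (Sc M δ) ∈ Metric.ball (toGHSpace M) ε := by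
    rw [mem_ball, ← ghDist_eq']
    exact sc_close hε0 hD hδD1
  set pt : ↥(Metric.ball (toGHSpace M) ε) := ⟨toGHSpace (Sc M δ), hin⟩ with hpt
  have happ : Fmap hC hε0 hεc h3' τ pt = pt := by
    have h := congrArg (fun F : (↥(Metric.ball (toGHSpace M) ε) ≃ᵢ
      ↥(Metric.ball (toGHSpace M) ε)) => F pt) hτ
    simp at h
    exact h
  have hscs : Surjective (Sc.un M δ) := fun m => ⟨m, rfl⟩
  have hscd := sc_labeling (M := M) (δ := δ) (ε := ε) hD hδD2
  have hFeq := Fmap_eq hC hε0 hεc h3' τ (Sc M δ) hscs hscd pt rfl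
  have hGHeq : toGHSpace (Mod M (Sc M δ) τ (Sc.un M δ)) = toGHSpace (Sc M δ) := by
    rw [← hFeq, happ]
  obtain ⟨G⟩ := toGHSpace_eq_toGHSpace_iff_isometryEquiv.1 hGHeq
  have hGsc : GoodF M (Sc M δ) (Sc.un M δ) :=
    goodF_of hC (le_of_lt hε0) (by linarith) hscd
  have hkey : ∀ a b : Mod M (Sc M δ) τ (Sc.un M δ),
      (1 + |δ|) * dist (Sc.un M δ (G a)) (Sc.un M δ (G b)) =
        |δ| * dist (Sc.un M δ a) (Sc.un M δ b) +
          dist (τ (Sc.un M δ a)) (τ (Sc.un M δ b)) := by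
    intro a b
    have h1 := G.dist_eq a b
    rw [Mod.dist_eq hGsc] at h1
    unfold modDist at h1
    rw [sc_dist] at h1
    rw [sc_dist δ a b] at h1
    linear_combination h1
  have hGinj : ∀ a b : M, Sc.un M δ (G a) = Sc.un M δ (G b) → a = b := by
    intro a b hab
    exact G.injective hab
  have hpair : ∀ a b : M, a ≠ b → ({τ a, τ b} : Set M) = {a, b} := by
    intro a b hab
    have hτab : τ a ≠ τ b := fun h => hab (τ.injective h)
    have hgab : Sc.un M δ (G a) ≠ Sc.un M δ (G b) := fun h => hab (hGinj a b h)
    have h1 := hkey a b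
    have hbd : |dist (Sc.un M δ (G a)) (Sc.un M δ (G b)) - dist a b| ≤ D := by
      rw [abs_le]
      constructor
      · have := hD a b
        have := dist_nonneg (x := Sc.un M δ (G a)) (y := Sc.un M δ (G b))
        linarith
      · have := hD (Sc.un M δ (G a)) (Sc.un M δ (G b))
        have := dist_nonneg (x := a) (y := b)
        linarith
    have hdiff : dist (τ a) (τ b) - dist (Sc.un M δ (G a)) (Sc.un M δ (G b)) =
        |δ| * (dist (Sc.un M δ (G a)) (Sc.un M δ (G b)) - dist a b) := by
      have hq1 : dist (Sc.un M δ a) (Sc.un M δ b) = dist a b := rfl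
      have hq2 : dist (τ (Sc.un M δ a)) (τ (Sc.un M δ b)) = dist (τ a) (τ b) := rfl
      rw [hq1, hq2] at h1
      linear_combination -h1
    have hsmall : |dist (τ a) (τ b) - dist (Sc.un M δ (G a)) (Sc.un M δ (G b))| ≤ ε := by
      rw [hdiff, abs_mul, abs_abs]
      calc |δ| * |dist (Sc.un M δ (G a)) (Sc.un M δ (G b)) - dist a b|
          ≤ |δ| * D := by
            apply mul_le_mul_of_nonneg_left hbd (abs_nonneg δ)
        _ ≤ ε := hδD1
    have hp1 : ({τ a, τ b} : Set M) = {Sc.un M δ (G a), Sc.un M δ (G b)} := by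
      by_contra hne
      have := hC.gap _ _ _ _ hτab hgab hne
      linarith
    have hdeq : dist (τ a) (τ b) = dist (Sc.un M δ (G a)) (Sc.un M δ (G b)) := by
      rcases Set.pair_eq_pair_iff.1 hp1 with ⟨e1, e2⟩ | ⟨e1, e2⟩
      · rw [e1, e2]
      · rw [e1, e2, dist_comm]
    have hgd : dist (Sc.un M δ (G a)) (Sc.un M δ (G b)) = dist a b := by
      have hδne : |δ| ≠ 0 := by rw [hδabs]; exact ne_of_gt hδ0
      have : |δ| * (dist (Sc.un M δ (G a)) (Sc.un M δ (G b)) - dist a b) = 0 := by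
        rw [hdeq, sub_self] at hdiff
        exact hdiff.symm
      rcases mul_eq_zero.1 this with h | h
      · exact absurd h hδne
      · linarith
    have hfinal : dist (τ a) (τ b) = dist a b := by rw [hdeq, hgd]
    by_contra hne
    have := hC.gap _ _ _ _ hτab hab hne
    rw [hfinal, sub_self, abs_zero] at this
    linarith
  apply Equiv.ext
  intro a
  obtain ⟨b, hba, -⟩ := h3' a a
  obtain ⟨b', hb'a, hb'b⟩ := h3' a b
  have h1 : τ a ∈ ({a, b} : Set M) := by
    rw [← hpair a b (Ne.symm hba)]
    exact Set.mem_insert _ _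
  have h2 : τ a ∈ ({a, b'} : Set M) := by
    rw [← hpair a b' (Ne.symm hb'a)]
    exact Set.mem_insert _ _
  simp only [Set.mem_insert_iff, Set.mem_singleton_iff] at h1 h2
  rcases h1 with h1 | h1
  · simpa using h1
  · rcases h2 with h2 | h2
    · simpa using h2
    · exact absurd (h2.symm.trans h1) hb'b

end
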